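/- Let C be a distributive category (finite products and coproducts with the canonical map (A×B)+(A×C) → A×(B+C) invertible) and let P : C^op → Lat be a lat-doctrine such that for all objects A,B the image P_{j_A} of the coproduct injection j_A : A → A+B has a left adjoint ∃_{j_A} satisfying Beck–Chevalley. Then for every object A the fibre P^ex(A) of the existential completion has binary joins, given by (A,B,α) ∨ (A,C,β) = (A, B+C, P_{θ^{-1}}(∃_{j_{A×B}}(α) ∨ ∃_{j_{A×C}}(β))), where θ : (A×B)+(A×C) → A×(B+C) is the canonical distributivity isomorphism. -/

import Mathlib

open CategoryTheory CategoryTheory.Limits Opposite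

universe u v

variable {C : Type u} [Category.{v} C] [HasFiniteProducts C]

/-- The fibre of a slat-doctrine `P : Cᵒᵖ ⥤ Pos` over an object `X` of `C`. -/
abbrev Fib (P : Cᵒᵖ ⥤ PartOrd) (X : C) : Type _ := (P.obj (op X) : Type _)

/-- Reindexing along `f : X ⟶ Y` (the monotone map `P f : P Y → P X`). -/
def rIdx (P : Cᵒᵖ ⥤ PartOrd) {X Y : C} (f : X ⟶ Y) (a : Fib P Y) : Fib P X :=
  (P.map f.op).hom.toFun a

/-- Objects of the fibre of a quantifier completion over `A`: triples `(A, B, α)`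
with `α ∈ P (A × B)` (the component `A` being fixed). -/
abbrev QObj (P : Cᵒᵖ ⥤ PartOrd) (A : C) : Type _ := Σ B : C, Fib P (A ⨯ B)

/-- The order of the universal completion `P^un`:
`(A,B,α) ≤ (A,C,γ)` iff there is `g : A×C ⟶ B` with `P⟨pr_A,g⟩(α) ≤ γ`. -/
def UnLe (P : Cᵒᵖ ⥤ PartOrd) {A : C} (x y : QObj P A) : Prop :=
  ∃ g : A ⨯ y.1 ⟶ x.1, rIdx P (prod.lift prod.fst g) x.2 ≤ y.2

/-- The order of the existential completion `P^ex`: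
`(A,B,α) ≤ (A,C,γ)` iff there is `f : A×B ⟶ C` with `α ≤ P⟨pr_A,f⟩(γ)`. -/
def ExLe (P : Cᵒᵖ ⥤ PartOrd) {A : C} (x y : QObj P A) : Prop :=
  ∃ f : A ⨯ x.1 ⟶ y.1, x.2 ≤ rIdx P (prod.lift prod.fst f) y.2

/-- Reindexing of the completions along `f : X ⟶ Y`: `(Y,D,δ) ↦ (X,D,P_{f×1}(δ))`. -/
noncomputable def QReindex (P : Cᵒᵖ ⥤ PartOrd) {X Y : C} (f : X ⟶ Y) (y : QObj P Y) :
    QObj P X :=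
  ⟨y.1, rIdx P (prod.map f (𝟙 y.1)) y.2⟩

variable [HasBinaryCoproducts C]

/-- The canonical distributivity map `(A×B)+(A×C) ⟶ A×(B+C)`. -/
noncomputable def distL (A B Cc : C) : (A ⨯ B) ⨿ (A ⨯ Cc) ⟶ A ⨯ (B ⨿ Cc) :=
  coprod.desc (prod.map (𝟙 A) coprod.inl) (prod.map (𝟙 A) coprod.inr)

/-- The canonical distributivity map `(A×D)+(B×D) ⟶ (A+B)×D`. -/
noncomputable def distR (A B D : C) : (A ⨯ D) ⨿ (B ⨯ D) ⟶ (A ⨿ B) ⨯ D :=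
  coprod.desc (prod.map coprod.inl (𝟙 D)) (prod.map coprod.inr (𝟙 D))

lemma rIdx_comp (P : Cᵒᵖ ⥤ PartOrd) {X Y Z : C} (f : X ⟶ Y) (g : Y ⟶ Z) (a : Fib P Z) :
    rIdx P (f ≫ g) a = rIdx P f (rIdx P g a) := by
  simp only [rIdx, op_comp, Functor.map_comp]; rfl

lemma rIdx_mono (P : Cᵒᵖ ⥤ PartOrd) {X Y : C} (f : X ⟶ Y) {a b : Fib P Y} (h : a ≤ b) :
    rIdx P f a ≤ rIdx P f b := (P.map f.op).hom.monotone h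

lemma inl_distL (A B Cc : C) :
    (coprod.inl : A ⨯ B ⟶ _) ≫ distL A B Cc = prod.map (𝟙 A) coprod.inl := by
  rw [distL, coprod.inl_desc]

lemma inr_distL (A B Cc : C) :
    (coprod.inr : A ⨯ Cc ⟶ _) ≫ distL A B Cc = prod.map (𝟙 A) coprod.inr := by
  rw [distL, coprod.inr_desc]

lemma lift_fst_snd {A B D : C} (h : B ⟶ D) :
    prod.lift prod.fst (prod.snd ≫ h) = prod.map (𝟙 A) h := by
  ext <;> simp only [prod.lift_fst, prod.lift_snd] <;> simp

/-- Let `C` be distributive and `P` a lat-doctrine (fibrewise lattices, preserved by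
reindexing) whose reindexings along coproduct injections have left adjoints `∃_j`
satisfying Beck–Chevalley.  Then each fibre `P^ex(A)` has binary joins, given by
`(A,B,α) ∨ (A,C,β) = (A, B+C, P_{θ⁻¹}(∃_{j_{A×B}}(α) ∨ ∃_{j_{A×C}}(β)))`. -/
theorem exCompletion_binary_joins (P : Cᵒᵖ ⥤ PartOrd)
    [hdist : ∀ A B Cc : C, IsIso (distL A B Cc)]
    (sup : ∀ X : C, Fib P X → Fib P X → Fib P X)
    (le_sup_left : ∀ (X : C) (a b : Fib P X), a ≤ sup X a b)
    (le_sup_right : ∀ (X : C) (a b : Fib P X), b ≤ sup X a b)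
    (sup_le : ∀ (X : C) (a b c : Fib P X), a ≤ c → b ≤ c → sup X a b ≤ c)
    (hsup : ∀ {X Y : C} (f : X ⟶ Y) (a b : Fib P Y),
      rIdx P f (sup Y a b) = sup X (rIdx P f a) (rIdx P f b))
    (inf : ∀ X : C, Fib P X → Fib P X → Fib P X)
    (inf_le_left : ∀ (X : C) (a b : Fib P X), inf X a b ≤ a)
    (inf_le_right : ∀ (X : C) (a b : Fib P X), inf X a b ≤ b)
    (le_inf : ∀ (X : C) (c a b : Fib P X), c ≤ a → c ≤ b → c ≤ inf X a b)
    (hinf : ∀ {X Y : C} (f : X ⟶ Y) (a b : Fib P Y),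
      rIdx P f (inf Y a b) = inf X (rIdx P f a) (rIdx P f b))
    (Einl : ∀ X Y : C, Fib P X → Fib P (X ⨿ Y))
    (Einr : ∀ X Y : C, Fib P Y → Fib P (X ⨿ Y))
    (adjl : ∀ (X Y : C) (a : Fib P X) (d : Fib P (X ⨿ Y)),
      Einl X Y a ≤ d ↔ a ≤ rIdx P coprod.inl d)
    (adjr : ∀ (X Y : C) (a : Fib P Y) (d : Fib P (X ⨿ Y)),
      Einr X Y a ≤ d ↔ a ≤ rIdx P coprod.inr d)
    (bcl : ∀ {X X' Y Y' : C} (f : X ⟶ X') (g : Y ⟶ Y') (a : Fib P X'),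
      Einl X Y (rIdx P f a) = rIdx P (coprod.map f g) (Einl X' Y' a))
    (bcr : ∀ {X X' Y Y' : C} (f : X ⟶ X') (g : Y ⟶ Y') (a : Fib P Y'),
      Einr X Y (rIdx P g a) = rIdx P (coprod.map f g) (Einr X' Y' a))
    (A : C) (x y : QObj P A) :
    let j : QObj P A :=
      ⟨x.1 ⨿ y.1,
        rIdx P (inv (distL A x.1 y.1))
          (sup ((A ⨯ x.1) ⨿ (A ⨯ y.1))
            (Einl (A ⨯ x.1) (A ⨯ y.1) x.2) (Einr (A ⨯ x.1) (A ⨯ y.1) y.2))⟩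
    ExLe P x j ∧ ExLe P y j ∧ ∀ z : QObj P A, ExLe P x z → ExLe P y z → ExLe P j z := by
  intro j
  refine ⟨?_, ?_, ?_⟩
  · refine ⟨prod.snd ≫ coprod.inl, ?_⟩
    have hcomp : prod.lift prod.fst (prod.snd ≫ coprod.inl) ≫ inv (distL A x.1 y.1)
        = (coprod.inl : A ⨯ x.1 ⟶ _) := by
      rw [← cancel_mono (distL A x.1 y.1), Category.assoc, IsIso.inv_hom_id,
        Category.comp_id, lift_fst_snd, inl_distL]
    show x.2 ≤ rIdx P _ (rIdx P (inv (distL A x.1 y.1)) _)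
    rw [← rIdx_comp, hcomp, ← adjl]
    exact le_sup_left _ _ _
  · refine ⟨prod.snd ≫ coprod.inr, ?_⟩
    have hcomp : prod.lift prod.fst (prod.snd ≫ coprod.inr) ≫ inv (distL A x.1 y.1)
        = (coprod.inr : A ⨯ y.1 ⟶ _) := by
      rw [← cancel_mono (distL A x.1 y.1), Category.assoc, IsIso.inv_hom_id,
        Category.comp_id, lift_fst_snd, inr_distL]
    show y.2 ≤ rIdx P _ (rIdx P (inv (distL A x.1 y.1)) _)
    rw [← rIdx_comp, hcomp, ← adjr]
    exact le_sup_right _ _ _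
  · rintro z ⟨f, hf⟩ ⟨g, hg⟩
    refine ⟨inv (distL A x.1 y.1) ≫ coprod.desc f g, ?_⟩
    show rIdx P (inv (distL A x.1 y.1)) _ ≤ _
    have hδ : rIdx P (prod.lift prod.fst (inv (distL A x.1 y.1) ≫ coprod.desc f g)) z.2
        = rIdx P (inv (distL A x.1 y.1))
            (rIdx P (distL A x.1 y.1 ≫
              prod.lift prod.fst (inv (distL A x.1 y.1) ≫ coprod.desc f g)) z.2) := by
      rw [← rIdx_comp, ← Category.assoc, IsIso.inv_hom_id, Category.id_comp]
    rw [hδ]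
    refine rIdx_mono P _ ?_
    refine sup_le _ _ _ _ ?_ ?_
    · rw [adjl, ← rIdx_comp]
      have hl : (coprod.inl : A ⨯ x.1 ⟶ _) ≫ distL A x.1 y.1 ≫
          prod.lift prod.fst (inv (distL A x.1 y.1) ≫ coprod.desc f g)
          = prod.lift prod.fst f := by
        rw [← Category.assoc, inl_distL]
        ext
        · simp only [Category.assoc, prod.lift_fst, prod.map_fst, Category.comp_id]
        · simp only [Category.assoc, prod.lift_snd]
          rw [← inl_distL, Category.assoc, IsIso.hom_inv_id_assoc]
          simp only [coprod.inl_desc, prod.lift_snd]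
      rw [hl]; exact hf
    · rw [adjr, ← rIdx_comp]
      have hr : (coprod.inr : A ⨯ y.1 ⟶ _) ≫ distL A x.1 y.1 ≫
          prod.lift prod.fst (inv (distL A x.1 y.1) ≫ coprod.desc f g)
          = prod.lift prod.fst g := by
        rw [← Category.assoc, inr_distL]
        ext
        · simp only [Category.assoc, prod.lift_fst, prod.map_fst, Category.comp_id]
        · simp only [Category.assoc, prod.lift_snd]
          rw [← inr_distL, Category.assoc, IsIso.hom_inv_id_assoc]
          simp only [coprod.inr_desc, prod.lift_snd]
      rw [hr]; exact hg
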